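/- Let each f^i satisfy m_f I ⪯ ∇²f^i ⪯ M_f I, let the graph on n vertices be connected, μ, ε > 0, and D_t = ∇²F(x_t) + (1/μ)(e^l(e^l)ᵀ ⊗ I_d) + (2/μ)(L_dia ⊗ I_d) + ε I, N = (1/μ)(L_dia - L_off) ⊗ I_d. Then the spectral radius of D_t^{-1/2} N D_t^{-1/2} is at most 2(n-1)/(μ(m_f + ε) + 2(n-1)) < 1. -/

import Mathlib

open Matrix Kronecker Finset SimpleGraph

section

open scoped ComplexOrder

/-- The positive semidefinite square root of a positive semidefinite matrix
(as defined in Mathlib of December 2024, since removed). -/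
noncomputable def Matrix.PosSemidef.sqrt {n 𝕜 : Type*} [Fintype n] [RCLike 𝕜] [DecidableEq n]
    {A : Matrix n n 𝕜} (hA : A.PosSemidef) : Matrix n n 𝕜 :=
  hA.1.eigenvectorUnitary.1 * diagonal ((↑) ∘ (√·) ∘ hA.1.eigenvalues) *
    (star hA.1.eigenvectorUnitary : Matrix n n 𝕜)

end

lemma Matrix.PosSemidef.sqrt_mul_self {m : Type*} [Fintype m] [DecidableEq m]
    {A : Matrix m m ℝ} (hA : A.PosSemidef) : hA.sqrt * hA.sqrt = A := by
  have hU : (star hA.1.eigenvectorUnitary : Matrix m m ℝ) * hA.1.eigenvectorUnitary.1 = 1 :=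
    Unitary.coe_star_mul_self _
  have hd : diagonal ((RCLike.ofReal : ℝ → ℝ) ∘ (√·) ∘ hA.1.eigenvalues) *
      diagonal ((RCLike.ofReal : ℝ → ℝ) ∘ (√·) ∘ hA.1.eigenvalues)
      = diagonal ((RCLike.ofReal : ℝ → ℝ) ∘ hA.1.eigenvalues) := by
    rw [diagonal_mul_diagonal]; congr 1; ext i
    simp [Real.mul_self_sqrt (hA.eigenvalues_nonneg i)]
  conv_rhs => rw [hA.1.spectral_theorem]
  rw [Unitary.conjStarAlgAut_apply]
  simp only [Matrix.PosSemidef.sqrt, Matrix.mul_assoc]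
  rw [← Matrix.mul_assoc _ hA.1.eigenvectorUnitary.1, hU, Matrix.one_mul, ← Matrix.mul_assoc _ _ (star _), hd]

lemma Matrix.PosSemidef.posSemidef_sqrt {m : Type*} [Fintype m] [DecidableEq m]
    {A : Matrix m m ℝ} (hA : A.PosSemidef) : hA.sqrt.PosSemidef := by
  unfold Matrix.PosSemidef.sqrt
  rw [Matrix.star_eq_conjTranspose]
  exact Matrix.PosSemidef.mul_mul_conjTranspose_same
    (Matrix.PosSemidef.diagonal fun i => by simp [Real.sqrt_nonneg]) _

lemma psd_smul {n : Type*} [Fintype n] {A : Matrix n n ℝ} (hA : A.PosSemidef) {c : ℝ}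
    (hc : 0 ≤ c) : (c • A).PosSemidef := by
  refine Matrix.PosSemidef.of_dotProduct_mulVec_nonneg ?_ (fun x => ?_)
  · unfold Matrix.IsHermitian
    rw [conjTranspose_smul, hA.1]
    simp
  · rw [smul_mulVec, dotProduct_smul, smul_eq_mul]
    exact mul_nonneg hc (hA.dotProduct_mulVec_nonneg x)

lemma psd_kron_one {n d : ℕ} {A : Matrix (Fin n) (Fin n) ℝ} (hA : A.PosSemidef) :
    (A ⊗ₖ (1 : Matrix (Fin d) (Fin d) ℝ)).PosSemidef := by
  have hB : hA.sqrt * hA.sqrt = A := hA.sqrt_mul_self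
  have hBH : hA.sqrt.conjTranspose = hA.sqrt := hA.posSemidef_sqrt.1
  have key : A ⊗ₖ (1 : Matrix (Fin d) (Fin d) ℝ) = (hA.sqrt ⊗ₖ 1)ᴴ * (hA.sqrt ⊗ₖ 1) := by
    have h1 : ((hA.sqrt ⊗ₖ (1 : Matrix (Fin d) (Fin d) ℝ))ᴴ : _) = hA.sqrt ⊗ₖ 1 := by
      ext ⟨i,a⟩ ⟨j,b⟩
      simp only [conjTranspose_apply, kroneckerMap_apply, star_mul', star_trivial]
      rw [show hA.sqrt j i = hA.sqrt i j from by conv_lhs => rw [← hBH]; simp [conjTranspose_apply]]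
      rw [show (1 : Matrix (Fin d) (Fin d) ℝ) b a = (1 : Matrix (Fin d) (Fin d) ℝ) a b from by
        simp [Matrix.one_apply, eq_comm]]
    rw [h1, ← mul_kronecker_mul, hB, one_mul]
  rw [key]
  exact posSemidef_conjTranspose_mul_self _

lemma psd_block {n d : ℕ} (R : Fin n → Matrix (Fin d) (Fin d) ℝ)
    (h : ∀ i, (R i).PosSemidef) :
    (Matrix.of fun (p q : Fin n × Fin d) => if p.1 = q.1 then R p.1 p.2 q.2 else 0).PosSemidef := by
  refine Matrix.PosSemidef.of_dotProduct_mulVec_nonneg ?_ (fun x => ?_)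
  · unfold Matrix.IsHermitian
    ext ⟨i,a⟩ ⟨j,b⟩
    simp only [conjTranspose_apply, Matrix.of_apply, star_trivial]
    by_cases hij : i = j
    · subst hij
      simp only [if_pos rfl]
      exact congrFun (congrFun (h i).1 a) b
    · simp [hij, Ne.symm hij]
  · have key : star x ⬝ᵥ ((Matrix.of fun (p q : Fin n × Fin d) =>
        if p.1 = q.1 then R p.1 p.2 q.2 else 0) *ᵥ x) =
        ∑ i : Fin n, star (fun a => x (i,a)) ⬝ᵥ (R i *ᵥ (fun a => x (i,a))) := by
      simp only [dotProduct, mulVec, star_trivial, Matrix.of_apply, Fintype.sum_prod_type,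
        dotProduct]
      congr 1; ext i
      congr 1; ext a
      congr 1
      rw [Finset.sum_comm]
      simp [Finset.sum_ite_eq, dotProduct]
    rw [key]
    exact Finset.sum_nonneg fun i _ => (h i).dotProduct_mulVec_nonneg _

lemma signless_form {n : ℕ} (G : SimpleGraph (Fin n)) [DecidableRel G.Adj] (x : Fin n → ℝ) :
    x ⬝ᵥ ((G.degMatrix ℝ + G.adjMatrix ℝ) *ᵥ x) =
    (∑ i, ∑ j, if G.Adj i j then (x i + x j)^2 else 0) / 2 := by
  simp_rw [add_mulVec, dotProduct_add, dotProduct_mulVec_degMatrix, dotProduct_mulVec_adjMatrix,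
    ← Finset.sum_add_distrib, degree_eq_sum_if_adj, Finset.sum_mul, ite_mul, one_mul,
    zero_mul, ← Finset.sum_add_distrib, ite_add_ite, add_zero]
  rw [← add_self_div_two (∑ i : Fin n, ∑ j : Fin n, _)]
  conv_lhs => enter [1,2,2,i,2,j]; rw [if_congr (adj_comm G i j) rfl rfl]
  conv_lhs => enter [1,2]; rw [Finset.sum_comm]
  simp_rw [← Finset.sum_add_distrib, ite_add_ite]
  congr 2 with i
  congr 2 with j
  ring_nf

lemma signless_psd {n : ℕ} (G : SimpleGraph (Fin n)) [DecidableRel G.Adj] :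
    (G.degMatrix ℝ + G.adjMatrix ℝ).PosSemidef := by
  refine Matrix.PosSemidef.of_dotProduct_mulVec_nonneg ?_ (fun x => ?_)
  · rw [Matrix.IsHermitian, conjTranspose_eq_transpose_of_trivial]
    exact ((isSymm_degMatrix _ G).add (isSymm_adjMatrix _))
  · rw [star_trivial, signless_form]
    positivity

set_option maxHeartbeats 1000000 in
lemma psd_diag {n : Type*} [Fintype n] [DecidableEq n] {f : n → ℝ} (h : ∀ i, 0 ≤ f i) :
    (Matrix.diagonal f).PosSemidef :=
  Matrix.PosSemidef.diagonal (fun i => h i)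

lemma pd_diag {n : Type*} [Fintype n] [DecidableEq n] {f : n → ℝ} (h : ∀ i, 0 < f i) :
    (Matrix.diagonal f).PosDef :=
  Matrix.posDef_diagonal_iff.mpr h

/-- Lemma 1: with D_t = ∇²F + (1/μ)(e^l(e^l)ᵀ ⊗ I_d) + (2/μ)(L_dia ⊗ I_d) + εI and
N = (1/μ)(L_dia − L_off) ⊗ I_d, the spectral radius of D_t^{-1/2} N D_t^{-1/2} is at most
2(n−1)/(μ(m_f+ε)+2(n−1)) < 1. -/
theorem spectral_radius_splitting_lt_one
    (n d : ℕ) (hn : 2 ≤ n) (G : SimpleGraph (Fin n)) [DecidableRel G.Adj]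
    (hG : G.Connected) (l : Fin n)
    (μ ε mf Mf : ℝ) (hμ : 0 < μ) (hε : 0 < ε) (hmf : 0 < mf) (hmM : mf ≤ Mf)
    (Q : Fin n → Matrix (Fin d) (Fin d) ℝ)
    (hQsym : ∀ i, (Q i).IsHermitian)
    (hQlow : ∀ i, (Q i - mf • (1 : Matrix (Fin d) (Fin d) ℝ)).PosSemidef)
    (hQhigh : ∀ i, (Mf • (1 : Matrix (Fin d) (Fin d) ℝ) - Q i).PosSemidef)
    (HessF : Matrix (Fin n × Fin d) (Fin n × Fin d) ℝ)
    (hHessF : HessF = Matrix.of fun p q => if p.1 = q.1 then Q p.1 p.2 q.2 else 0)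
    (Ldia : Matrix (Fin n) (Fin n) ℝ)
    (hLdia : Ldia = Matrix.diagonal (fun i => (G.degree i : ℝ)))
    (Loff : Matrix (Fin n) (Fin n) ℝ) (hLoff : Loff = G.lapMatrix ℝ - Ldia)
    (D N : Matrix (Fin n × Fin d) (Fin n × Fin d) ℝ)
    (hDdef : D = HessF
      + μ⁻¹ • (Matrix.single l l 1 ⊗ₖ (1 : Matrix (Fin d) (Fin d) ℝ))
      + (2 / μ) • (Ldia ⊗ₖ (1 : Matrix (Fin d) (Fin d) ℝ))
      + ε • (1 : Matrix (Fin n × Fin d) (Fin n × Fin d) ℝ))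
    (hNdef : N = μ⁻¹ • ((Ldia - Loff) ⊗ₖ (1 : Matrix (Fin d) (Fin d) ℝ)))
    (hD : D.PosSemidef) :
    spectralRadius ℝ ((Matrix.PosSemidef.sqrt hD)⁻¹ * N * (Matrix.PosSemidef.sqrt hD)⁻¹) ≤
      ENNReal.ofReal (2 * ((n : ℝ) - 1) / (μ * (mf + ε) + 2 * ((n : ℝ) - 1))) ∧
    2 * ((n : ℝ) - 1) / (μ * (mf + ε) + 2 * ((n : ℝ) - 1)) < 1 := by
  have hn2 : (2 : ℝ) ≤ (n : ℝ) := by exact_mod_cast hn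
  set K : ℝ := 2 * ((n : ℝ) - 1) with hKdef
  set S : ℝ := μ * (mf + ε) with hSdef
  have hK : 0 < K := by simp only [hKdef]; linarith
  have hS : 0 < S := by simp only [hSdef]; positivity
  obtain ⟨c, hcdef⟩ : ∃ x : ℝ, x = K / (S + K) := ⟨_, rfl⟩
  have hc0 : 0 ≤ c := by rw [hcdef]; positivity
  have hc1 : c < 1 := by
    rw [hcdef, div_lt_one (by linarith)]; linarith
  have keym : c * (mf + ε) * μ = (1 - c) * K := by
    rw [hcdef]; field_simp; ring
  -- laplacian notation
  set L : Matrix (Fin n) (Fin n) ℝ := G.lapMatrix ℝ with hLdef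
  have hLpsd : L.PosSemidef := posSemidef_lapMatrix ℝ G
  have hLdiaDeg : Ldia = G.degMatrix ℝ := by
    rw [hLdia]; rfl
  -- PSD pieces
  have hQ' : (HessF - mf • (1 : Matrix (Fin n × Fin d) (Fin n × Fin d) ℝ)).PosSemidef := by
    have : HessF - mf • (1 : Matrix (Fin n × Fin d) (Fin n × Fin d) ℝ) =
        Matrix.of fun (p q : Fin n × Fin d) => if p.1 = q.1 then
          (Q p.1 - mf • (1 : Matrix (Fin d) (Fin d) ℝ)) p.2 q.2 else 0 := by
      ext ⟨i,a⟩ ⟨j,b⟩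
      simp only [hHessF, Matrix.sub_apply, Matrix.smul_apply, Matrix.of_apply, Matrix.one_apply,
        smul_eq_mul, Prod.mk.injEq]
      by_cases hij : i = j <;> by_cases hab : a = b <;> simp [hij, hab]
    rw [this]
    exact psd_block _ hQlow
  have hEpsd : (Matrix.single l l (1:ℝ)).PosSemidef := by
    have : Matrix.single l l (1:ℝ) =
        Matrix.diagonal (fun i => if i = l then (1:ℝ) else 0) := by
      ext i j
      simp only [Matrix.single, Matrix.of_apply, Matrix.diagonal_apply]
      by_cases hi : i = j <;> by_cases hl : i = l <;> simp_all [eq_comm]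
    rw [this]
    exact psd_diag (fun i => by split <;> norm_num)
  have hLdiaPsd : Matrix.PosSemidef Ldia := by
    rw [hLdia]
    exact psd_diag (fun i => Nat.cast_nonneg _)
  have hSignless : (Ldia - Loff).PosSemidef := by
    have : Ldia - Loff = G.degMatrix ℝ + G.adjMatrix ℝ := by
      rw [hLoff, hLdiaDeg, hLdef, lapMatrix]
      abel
    rw [this]
    exact signless_psd G
  have hNpsd : N.PosSemidef := by
    rw [hNdef]
    exact psd_smul (psd_kron_one hSignless) (by positivity)
  have hTail : ((K • (1 : Matrix (Fin n) (Fin n) ℝ) - (2:ℝ) • Ldia + L)).PosSemidef := by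
    have h1 : K • (1 : Matrix (Fin n) (Fin n) ℝ) - (2:ℝ) • Ldia + L =
        ((2:ℝ) • (Matrix.diagonal (fun i => ((n : ℝ) - 1) - (G.degree i : ℝ)))) + L := by
      rw [hLdia]
      ext i j
      simp only [Matrix.add_apply, Matrix.sub_apply, Matrix.smul_apply, Matrix.one_apply,
        Matrix.diagonal_apply, smul_eq_mul, hKdef]
      by_cases hij : i = j <;> simp [hij] <;> ring
    rw [h1]
    refine Matrix.PosSemidef.add (psd_smul (psd_diag fun i => ?_) (by norm_num)) hLpsd
    have h2 := G.degree_lt_card_verts i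
    simp only [Fintype.card_fin] at h2
    have h3 : ((G.degree i : ℝ)) + 1 ≤ (n : ℝ) := by exact_mod_cast h2
    linarith
  -- D is positive definite
  have hDdecomp : D = (HessF - mf • 1)
      + μ⁻¹ • (Matrix.single l l 1 ⊗ₖ (1 : Matrix (Fin d) (Fin d) ℝ))
      + (2 / μ) • (Ldia ⊗ₖ (1 : Matrix (Fin d) (Fin d) ℝ))
      + (mf + ε) • (1 : Matrix (Fin n × Fin d) (Fin n × Fin d) ℝ) := by
    rw [hDdef]
    ext p q
    simp only [Matrix.add_apply, Matrix.sub_apply, Matrix.smul_apply, smul_eq_mul]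
    ring
  have hOnePd : ((mf + ε) • (1 : Matrix (Fin n × Fin d) (Fin n × Fin d) ℝ)).PosDef := by
    have : (mf + ε) • (1 : Matrix (Fin n × Fin d) (Fin n × Fin d) ℝ) =
        Matrix.diagonal (fun _ => mf + ε) := by
      ext p q
      by_cases h : p = q <;> simp [Matrix.one_apply, Matrix.diagonal_apply, h]
    rw [this]
    exact pd_diag (fun i => add_pos hmf hε)
  have hDpos : D.PosDef := by
    rw [hDdecomp]
    exact Matrix.PosDef.posSemidef_add
      ((hQ'.add (psd_smul (psd_kron_one hEpsd) (inv_nonneg.mpr hμ.le))).add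
        (psd_smul (psd_kron_one hLdiaPsd) (div_nonneg (by norm_num) hμ.le))) hOnePd
  -- sqrt invertibility
  have hdetD : D.det ≠ 0 := hDpos.det_pos.ne'
  have hsq : hD.sqrt * hD.sqrt = D := hD.sqrt_mul_self
  have hdet : IsUnit hD.sqrt.det := by
    refine isUnit_iff_ne_zero.mpr (fun h => hdetD ?_)
    rw [← hsq, Matrix.det_mul, h, mul_zero]
  set T : Matrix (Fin n × Fin d) (Fin n × Fin d) ℝ := (hD.sqrt)⁻¹ with hTdef
  have hTS : T * hD.sqrt = 1 := Matrix.nonsing_inv_mul _ hdet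
  have hST : hD.sqrt * T = 1 := Matrix.mul_nonsing_inv _ hdet
  have hTH : Tᴴ = T := by
    rw [hTdef, Matrix.conjTranspose_nonsing_inv, hD.posSemidef_sqrt.1]
  have hTDT : T * D * T = 1 := by
    rw [← hsq]
    simp only [Matrix.mul_assoc]
    rw [hST, Matrix.mul_one, hTS]
  set M : Matrix (Fin n × Fin d) (Fin n × Fin d) ℝ := T * N * T with hMdef
  have hMpsd : M.PosSemidef := by
    have := Matrix.PosSemidef.mul_mul_conjTranspose_same hNpsd T
    rwa [hTH] at this
  -- key matrix identity
  have hkey : c • D - N = c • (HessF - mf • 1)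
      + (c/μ) • (Matrix.single l l 1 ⊗ₖ (1 : Matrix (Fin d) (Fin d) ℝ))
      + (c/μ) • (L ⊗ₖ (1 : Matrix (Fin d) (Fin d) ℝ))
      + ((1-c)/μ) • ((K • (1 : Matrix (Fin n) (Fin n) ℝ) - (2:ℝ) • Ldia + L) ⊗ₖ
          (1 : Matrix (Fin d) (Fin d) ℝ)) := by
    rw [hDdef, hNdef, hLoff]
    rw [show (1 : Matrix (Fin n × Fin d) (Fin n × Fin d) ℝ)
        = (1 : Matrix (Fin n) (Fin n) ℝ) ⊗ₖ (1 : Matrix (Fin d) (Fin d) ℝ) from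
      (Matrix.one_kronecker_one).symm]
    ext ⟨i,a⟩ ⟨j,b⟩
    simp only [Matrix.add_apply, Matrix.sub_apply, Matrix.smul_apply, Matrix.kroneckerMap_apply,
      smul_eq_mul]
    have hμinv : μ * μ⁻¹ = 1 := mul_inv_cancel₀ hμ.ne'
    linear_combination ((1 : Matrix (Fin n) (Fin n) ℝ) i j *
      (1 : Matrix (Fin d) (Fin d) ℝ) a b / μ) * keym
      - (c * (mf + ε) * ((1 : Matrix (Fin n) (Fin n) ℝ) i j *
        (1 : Matrix (Fin d) (Fin d) ℝ) a b)) * hμinv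
  have hCDN : (c • D - N).PosSemidef := by
    rw [hkey]
    exact (((psd_smul hQ' hc0).add
      (psd_smul (psd_kron_one hEpsd) (div_nonneg hc0 hμ.le))).add
      (psd_smul (psd_kron_one hLpsd) (div_nonneg hc0 hμ.le))).add
      (psd_smul (psd_kron_one hTail) (div_nonneg (by linarith) hμ.le))
  have hCone : (c • (1 : Matrix (Fin n × Fin d) (Fin n × Fin d) ℝ) - M).PosSemidef := by
    have h1 : c • (1 : Matrix (Fin n × Fin d) (Fin n × Fin d) ℝ) - M
        = T * (c • D - N) * Tᴴ := by
      rw [hTH]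
      have e1 : T * (c • D - N) * T = c • (T * D * T) - T * N * T := by
        rw [Matrix.mul_sub, Matrix.sub_mul, mul_smul_comm, smul_mul_assoc]
      rw [e1, hTDT, hMdef]
    rw [h1]
    exact Matrix.PosSemidef.mul_mul_conjTranspose_same hCDN T
  constructor
  · unfold spectralRadius
    refine iSup₂_le fun k hk => ?_
    have hk' := spectrum.mem_iff.mp hk
    rw [Matrix.isUnit_iff_isUnit_det] at hk'
    have hdet0 : ((algebraMap ℝ (Matrix (Fin n × Fin d) (Fin n × Fin d) ℝ)) k - M).det = 0 := by
      by_contra h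
      exact hk' (isUnit_iff_ne_zero.mpr h)
    obtain ⟨v, hv0, hv⟩ := (Matrix.exists_mulVec_eq_zero_iff).mpr hdet0
    have heig : M *ᵥ v = k • v := by
      have h2 := hv
      rw [Matrix.sub_mulVec, Algebra.algebraMap_eq_smul_one, Matrix.smul_mulVec,
        Matrix.one_mulVec, sub_eq_zero] at h2
      exact h2.symm
    have hvv : 0 < v ⬝ᵥ v := by
      rcases lt_or_eq_of_le (Finset.sum_nonneg fun i _ => mul_self_nonneg (v i) :
        (0:ℝ) ≤ v ⬝ᵥ v) with h | h
      · exact h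
      · exact absurd (dotProduct_self_eq_zero.mp h.symm) hv0
    have hk0 : 0 ≤ k := by
      have := hMpsd.dotProduct_mulVec_nonneg v
      rw [star_trivial, heig, dotProduct_smul, smul_eq_mul] at this
      nlinarith
    have hkc : k ≤ c := by
      have := hCone.dotProduct_mulVec_nonneg v
      rw [star_trivial, Matrix.sub_mulVec, Matrix.smul_mulVec, Matrix.one_mulVec, heig,
        dotProduct_sub, dotProduct_smul, dotProduct_smul, smul_eq_mul, smul_eq_mul] at this
      nlinarith
    rw [← ENNReal.ofReal_coe_nnreal, coe_nnnorm]
    refine ENNReal.ofReal_le_ofReal ?_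
    rw [Real.norm_eq_abs, abs_of_nonneg hk0]
    rw [← hcdef]
    exact hkc
  · rw [← hcdef]
    exact hc1
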